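/- arXiv:1703.01266 — 2 statements merged into one kernel-verified Lean document; each statement's English description precedes it below -/
import Mathlib

section
/- For all density matrices ρ₁ on ℂ^{d₁} and ρ₂ on ℂ^{d₂}, the robustness of coherence of their Kronecker (tensor) product satisfies C_R(ρ₁ ⊗ ρ₂) ≤ C_R(ρ₁) + C_R(ρ₂) + C_R(ρ₁)·C_R(ρ₂), where coherence on the tensor product is measured with respect to the product standard basis. -/
open Matrix BigOperators
open scoped ComplexOrder

noncomputable section

/-- A density matrix: positive semidefinite with unit trace. -/
def IsDensity {n : Type*} [Fintype n] (ρ : Matrix n n ℂ) : Prop :=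
  ρ.PosSemidef ∧ ρ.trace = 1

/-- A matrix is incoherent if it is diagonal in the fixed (standard) basis. -/
def IsIncoherent {n : Type*} (σ : Matrix n n ℂ) : Prop :=
  ∀ i j, i ≠ j → σ i j = 0

/-- The coherence weight of a state `ρ`. -/
noncomputable def cohWeight {n : Type*} [Fintype n] (ρ : Matrix n n ℂ) : ℝ :=
  sInf {s : ℝ | s ∈ Set.Icc (0 : ℝ) 1 ∧
    ∃ σ τ : Matrix n n ℂ,
      IsDensity σ ∧ IsIncoherent σ ∧ IsDensity τ ∧
      ρ = (1 - s) • σ + s • τ}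

/-- The robustness of coherence. -/
noncomputable def cohRobustness {n : Type*} [Fintype n] (ρ : Matrix n n ℂ) : ℝ :=
  sInf {s : ℝ | 0 ≤ s ∧ ∃ τ : Matrix n n ℂ, IsDensity τ ∧
    IsIncoherent ((1 + s)⁻¹ • (ρ + s • τ))}

/-- The `l₁` norm of coherence: sum of absolute values of off-diagonal entries. -/
noncomputable def Cl1 {n : Type*} [Fintype n] [DecidableEq n] (ρ : Matrix n n ℂ) : ℝ :=
  ∑ i : n, ∑ j : n, if i = j then 0 else ‖ρ i j‖

open Kronecker

lemma conjTranspose_kron' {l m n p : Type*} (A : Matrix l m ℂ) (B : Matrix n p ℂ) :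
    (A ⊗ₖ B)ᴴ = Aᴴ ⊗ₖ Bᴴ := by
  ext ⟨i, k⟩ ⟨j, l'⟩
  simp [Matrix.conjTranspose_apply, Matrix.kronecker_apply, mul_comm]

lemma psd_kron' {m n : Type*} [Fintype m] [Fintype n] {A : Matrix m m ℂ} {B : Matrix n n ℂ}
    (hA : A.PosSemidef) (hB : B.PosSemidef) : (A ⊗ₖ B).PosSemidef := by
  exact Matrix.PosSemidef.kronecker hA hB

lemma psd_smul' {n : Type*} [Fintype n] {M : Matrix n n ℂ} (hM : M.PosSemidef) {r : ℝ}
    (hr : 0 ≤ r) : (r • M).PosSemidef := by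
  refine ⟨?_, fun x => ?_⟩
  · have h := hM.1
    unfold Matrix.IsHermitian at h ⊢
    ext i j
    simp [Matrix.conjTranspose_apply, Complex.real_smul, ← Matrix.ext_iff.mpr h i j,
      Matrix.conjTranspose_apply]
  · exact (hM.smul hr).2 x

lemma one_sub_posSemidef' {n : Type*} [Fintype n] [DecidableEq n] {ρ : Matrix n n ℂ}
    (hpsd : ρ.PosSemidef) (htr : ρ.trace = 1) : ((1 : Matrix n n ℂ) - ρ).PosSemidef := by
  have hH := hpsd.isHermitian
  have hspec := hH.spectral_theorem
  rw [Unitary.conjStarAlgAut_apply] at hspec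
  set U : Matrix n n ℂ := (hH.eigenvectorUnitary : Matrix n n ℂ) with hU
  have hUU : U * star U = 1 := (Matrix.mem_unitaryGroup_iff).mp hH.eigenvectorUnitary.2
  have hUU' : star U * U = 1 := (Matrix.mem_unitaryGroup_iff').mp hH.eigenvectorUnitary.2
  have htrD : ∑ i, (hH.eigenvalues i : ℂ) = 1 := by
    have h2 : ρ.trace = (Matrix.diagonal (RCLike.ofReal ∘ hH.eigenvalues) : Matrix n n ℂ).trace := by
      conv_lhs => rw [hspec]
      rw [Matrix.trace_mul_cycle, hUU', one_mul]
    rw [htr] at h2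
    rw [h2]
    simp [Matrix.trace_diagonal]
  have hsum : ∑ i, hH.eigenvalues i = 1 := by exact_mod_cast htrD
  have hle : ∀ i, hH.eigenvalues i ≤ 1 := by
    intro i
    rw [← hsum]
    exact Finset.single_le_sum (fun j _ => hpsd.eigenvalues_nonneg j) (Finset.mem_univ i)
  have key : (1 : Matrix n n ℂ) - ρ
      = U * Matrix.diagonal (fun i => ((1 - hH.eigenvalues i : ℝ) : ℂ)) * star U := by
    have h1 : (Matrix.diagonal (fun i => ((1 - hH.eigenvalues i : ℝ) : ℂ)))
        = 1 - Matrix.diagonal (RCLike.ofReal ∘ hH.eigenvalues) := by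
      ext i j
      by_cases h : i = j <;> simp [Matrix.diagonal, Matrix.one_apply, h, Complex.ofReal_sub]
    rw [h1, Matrix.mul_sub, Matrix.sub_mul, mul_one, hUU, ← hspec]
  rw [key]
  have hdiag : (Matrix.diagonal (fun i => ((1 - hH.eigenvalues i : ℝ) : ℂ))).PosSemidef :=
    Matrix.PosSemidef.diagonal fun i => by
      rw [Complex.le_def]
      constructor <;> simp [sub_nonneg.mpr (hle i)]
  have := Matrix.PosSemidef.mul_mul_conjTranspose_same hdiag U
  rwa [← Matrix.star_eq_conjTranspose] at this

lemma robust_set_nonempty' {d : ℕ} {ρ : Matrix (Fin d) (Fin d) ℂ} (hρ : IsDensity ρ) :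
    Set.Nonempty {s : ℝ | 0 ≤ s ∧ ∃ τ : Matrix (Fin d) (Fin d) ℂ, IsDensity τ ∧
      IsIncoherent ((1 + s)⁻¹ • (ρ + s • τ))} := by
  have hd : 0 < d := by
    by_contra h
    interval_cases d
    · have := hρ.2
      simp [Matrix.trace] at this
  have hd0 : (d : ℝ) ≠ 0 := by positivity
  set c : ℝ := (d + 1) / d with hc
  set τ : Matrix (Fin d) (Fin d) ℂ := (d : ℝ)⁻¹ • (c • (1 : Matrix (Fin d) (Fin d) ℂ) - ρ) with hτ
  have hsplit : c • (1 : Matrix (Fin d) (Fin d) ℂ) - ρ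
      = ((1 : Matrix (Fin d) (Fin d) ℂ) - ρ) + ((1 : ℝ)/d) • 1 := by
    have h1 : c = 1 + 1/d := by rw [hc]; field_simp
    rw [h1, add_smul, one_smul]
    abel
  have hpsd1 : (c • (1 : Matrix (Fin d) (Fin d) ℂ) - ρ).PosSemidef := by
    rw [hsplit]
    exact (one_sub_posSemidef' hρ.1 hρ.2).add (psd_smul' Matrix.PosSemidef.one (by positivity))
  refine ⟨(d : ℝ), by positivity, τ, ⟨psd_smul' hpsd1 (by positivity), ?_⟩, ?_⟩
  · have hdC : (d : ℂ) ≠ 0 := by exact_mod_cast hd0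
    rw [hτ, Matrix.trace_smul, Matrix.trace_sub, Matrix.trace_smul, Matrix.trace_one, hρ.2]
    simp only [Complex.real_smul, Fintype.card_fin, hc]
    push_cast
    field_simp
    ring
  · have hmul : (d : ℝ) • τ = c • (1 : Matrix (Fin d) (Fin d) ℂ) - ρ := by
      rw [hτ, smul_smul, mul_inv_cancel₀ hd0, one_smul]
    have hsum : ρ + (d : ℝ) • τ = c • (1 : Matrix (Fin d) (Fin d) ℂ) := by
      rw [hmul]; abel
    intro i j hij
    rw [hsum]
    simp [Matrix.smul_apply, Matrix.one_apply_ne hij]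

def RSet {n : Type*} [Fintype n] (ρ : Matrix n n ℂ) : Set ℝ :=
  {s : ℝ | 0 ≤ s ∧ ∃ τ : Matrix n n ℂ, IsDensity τ ∧
    IsIncoherent ((1 + s)⁻¹ • (ρ + s • τ))}

lemma cohRobustness_eq_sInf_RSet {n : Type*} [Fintype n] (ρ : Matrix n n ℂ) :
    cohRobustness ρ = sInf (RSet ρ) := rfl

lemma RSet_offdiag {n : Type*} [Fintype n] {ρ τ : Matrix n n ℂ} {s : ℝ} (hs : 0 ≤ s)
    (h : IsIncoherent ((1 + s)⁻¹ • (ρ + s • τ))) :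
    ∀ i j, i ≠ j → ρ i j + (s : ℂ) * τ i j = 0 := by
  intro i j hij
  have h0 := h i j hij
  simp only [Matrix.smul_apply, Matrix.add_apply, Complex.real_smul] at h0
  have hne : ((1 + s : ℝ) : ℂ) ≠ 0 := by
    have : (0:ℝ) < 1 + s := by linarith
    simp only [ne_eq, Complex.ofReal_eq_zero]
    linarith
  rcases mul_eq_zero.mp h0 with h' | h'
  · exact absurd h' (by simpa using hne)
  · exact h'

lemma mem_RSet_kron {d₁ d₂ : ℕ}
    {ρ₁ : Matrix (Fin d₁) (Fin d₁) ℂ} {ρ₂ : Matrix (Fin d₂) (Fin d₂) ℂ}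
    {s₁ s₂ : ℝ} {τ₁ : Matrix (Fin d₁) (Fin d₁) ℂ} {τ₂ : Matrix (Fin d₂) (Fin d₂) ℂ}
    (hρ₁ : IsDensity ρ₁) (hρ₂ : IsDensity ρ₂)
    (hs₁ : 0 ≤ s₁) (hs₂ : 0 ≤ s₂) (hτ₁ : IsDensity τ₁) (hτ₂ : IsDensity τ₂)
    (h₁ : IsIncoherent ((1 + s₁)⁻¹ • (ρ₁ + s₁ • τ₁)))
    (h₂ : IsIncoherent ((1 + s₂)⁻¹ • (ρ₂ + s₂ • τ₂))) :
    (s₁ + s₂ + s₁ * s₂) ∈ RSet (ρ₁ ⊗ₖ ρ₂) := by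
  have k₁ := RSet_offdiag hs₁ h₁
  have k₂ := RSet_offdiag hs₂ h₂
  set s : ℝ := s₁ + s₂ + s₁ * s₂ with hsdef
  have hs : 0 ≤ s := by positivity
  rcases eq_or_lt_of_le hs with h0 | hpos
  · -- s = 0, hence s₁ = s₂ = 0 and ρ₁ ⊗ ρ₂ is already incoherent
    have hs₁0 : s₁ = 0 := by nlinarith
    have hs₂0 : s₂ = 0 := by nlinarith
    refine ⟨hs, ρ₁ ⊗ₖ ρ₂,
      ⟨psd_kron' hρ₁.1 hρ₂.1, by rw [Matrix.trace_kronecker, hρ₁.2, hρ₂.2, mul_one]⟩, ?_⟩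
    rintro ⟨i, k⟩ ⟨j, l⟩ hpq
    have hfac : ρ₁ i j * ρ₂ k l = 0 := by
      by_cases hij : i = j
      · have hkl : k ≠ l := fun hkl => hpq (by rw [hij, hkl])
        have := k₂ k l hkl
        rw [hs₂0] at this
        simp only [Complex.ofReal_zero, zero_mul, add_zero] at this
        rw [this, mul_zero]
      · have := k₁ i j hij
        rw [hs₁0] at this
        simp only [Complex.ofReal_zero, zero_mul, add_zero] at this
        rw [this, zero_mul]
    simp [Matrix.smul_apply, Matrix.add_apply, Matrix.kronecker_apply, hfac]
  · -- s > 0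
    have hsne : s ≠ 0 := ne_of_gt hpos
    have hsC : (s : ℂ) ≠ 0 := by exact_mod_cast hsne
    refine ⟨hs, s⁻¹ • (s₁ • (τ₁ ⊗ₖ ρ₂) + s₂ • (ρ₁ ⊗ₖ τ₂) + (s₁ * s₂) • (τ₁ ⊗ₖ τ₂)),
      ⟨?_, ?_⟩, ?_⟩
    · exact psd_smul'
        (((psd_smul' (psd_kron' hτ₁.1 hρ₂.1) hs₁).add
          (psd_smul' (psd_kron' hρ₁.1 hτ₂.1) hs₂)).add
          (psd_smul' (psd_kron' hτ₁.1 hτ₂.1) (mul_nonneg hs₁ hs₂)))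
        (inv_nonneg.mpr hs)
    · rw [Matrix.trace_smul, Matrix.trace_add, Matrix.trace_add, Matrix.trace_smul,
        Matrix.trace_smul, Matrix.trace_smul, Matrix.trace_kronecker, Matrix.trace_kronecker,
        Matrix.trace_kronecker, hρ₁.2, hρ₂.2, hτ₁.2, hτ₂.2]
      simp only [Complex.real_smul, mul_one, hsdef]
      push_cast
      field_simp
      rw [hsdef] at hsC
      push_cast at hsC
      exact div_self hsC
    · rintro ⟨i, k⟩ ⟨j, l⟩ hpq
      have key : (ρ₁ ⊗ₖ ρ₂ + s • (s⁻¹ • (s₁ • (τ₁ ⊗ₖ ρ₂) + s₂ • (ρ₁ ⊗ₖ τ₂)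
            + (s₁ * s₂) • (τ₁ ⊗ₖ τ₂)))) (i, k) (j, l)
          = (ρ₁ i j + (s₁ : ℂ) * τ₁ i j) * (ρ₂ k l + (s₂ : ℂ) * τ₂ k l) := by
        simp only [Matrix.add_apply, Matrix.smul_apply, Matrix.kronecker_apply,
          Complex.real_smul]
        push_cast
        field_simp
        ring
      rw [Matrix.smul_apply, key]
      by_cases hij : i = j
      · have hkl : k ≠ l := fun hkl => hpq (by rw [hij, hkl])
        rw [k₂ k l hkl, mul_zero, smul_zero]
      · rw [k₁ i j hij, zero_mul, smul_zero]

theorem cohRobustness_tensor_submultiplicative {d₁ d₂ : ℕ}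
    (ρ₁ : Matrix (Fin d₁) (Fin d₁) ℂ) (hρ₁ : IsDensity ρ₁)
    (ρ₂ : Matrix (Fin d₂) (Fin d₂) ℂ) (hρ₂ : IsDensity ρ₂) :
    cohRobustness (ρ₁ ⊗ₖ ρ₂) ≤
      cohRobustness ρ₁ + cohRobustness ρ₂ + cohRobustness ρ₁ * cohRobustness ρ₂ := by
  have ne₁ : (RSet ρ₁).Nonempty := robust_set_nonempty' hρ₁
  have ne₂ : (RSet ρ₂).Nonempty := robust_set_nonempty' hρ₂
  have bdd : BddBelow (RSet (ρ₁ ⊗ₖ ρ₂)) := ⟨0, fun x hx => hx.1⟩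
  rw [cohRobustness_eq_sInf_RSet, cohRobustness_eq_sInf_RSet, cohRobustness_eq_sInf_RSet]
  set r₁ := sInf (RSet ρ₁) with hr₁
  set r₂ := sInf (RSet ρ₂) with hr₂
  have r₂nn : 0 ≤ r₂ := le_csInf ne₂ (fun x hx => hx.1)
  have key : ∀ s₁ ∈ RSet ρ₁, ∀ s₂ ∈ RSet ρ₂,
      sInf (RSet (ρ₁ ⊗ₖ ρ₂)) ≤ s₁ + s₂ + s₁ * s₂ := by
    rintro s₁ ⟨hs₁, τ₁, hτ₁, h₁⟩ s₂ ⟨hs₂, τ₂, hτ₂, h₂⟩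
    exact csInf_le bdd (mem_RSet_kron hρ₁ hρ₂ hs₁ hs₂ hτ₁ hτ₂ h₁ h₂)
  have step1 : ∀ s₁ ∈ RSet ρ₁, sInf (RSet (ρ₁ ⊗ₖ ρ₂)) ≤ s₁ + r₂ + s₁ * r₂ := by
    intro s₁ hs₁
    have h1p : (0:ℝ) < 1 + s₁ := by have := hs₁.1; linarith
    have h2 : (sInf (RSet (ρ₁ ⊗ₖ ρ₂)) - s₁) / (1 + s₁) ≤ r₂ := by
      refine le_csInf ne₂ (fun s₂ hs₂ => ?_)
      rw [div_le_iff₀ h1p]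
      have := key s₁ hs₁ s₂ hs₂
      nlinarith
    rw [div_le_iff₀ h1p] at h2
    nlinarith
  have h2p : (0:ℝ) < 1 + r₂ := by linarith
  have h3 : (sInf (RSet (ρ₁ ⊗ₖ ρ₂)) - r₂) / (1 + r₂) ≤ r₁ := by
    refine le_csInf ne₁ (fun s₁ hs₁ => ?_)
    rw [div_le_iff₀ h2p]
    have := step1 s₁ hs₁
    nlinarith
  rw [div_le_iff₀ h2p] at h3
  nlinarith
end
end

section
/- Let ρ = |ψ⟩⟨ψ| be a pure-state density matrix on ℂ^{d₁} ⊗ ℂ^{d₂} (indexed by pairs (i,j)), and let ρ₁ and ρ₂ be its reduced density matrices, (ρ₁)_{i,i'} = Σ_j ρ_{(i,j),(i',j)} and (ρ₂)_{j,j'} = Σ_i ρ_{(i,j),(i,j')}. Then C_R(ρ) ≥ C_R(ρ₁) + C_R(ρ₂), where coherence on the bipartite system is measured with respect to the product standard basis and on each subsystem with respect to its standard basis. -/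
open Matrix BigOperators
open scoped ComplexOrder

noncomputable section

lemma offterm {n : Type*} [Fintype n] [DecidableEq n] (ρ : Matrix n n ℂ)
    (hHe : ∀ a b : n, star (ρ b a) = ρ a b)
    (a b : n) (hab : a ≠ b) (p q : n) :
    (if p = q then (0:ℂ)
      else (if a = p then -ρ p q / (Real.sqrt ‖ρ p q‖ : ℂ)
             else if a = q then ((Real.sqrt ‖ρ p q‖ : ℝ) : ℂ) else 0)
           * star (if b = p then -ρ p q / (Real.sqrt ‖ρ p q‖ : ℂ)
             else if b = q then ((Real.sqrt ‖ρ p q‖ : ℝ) : ℂ) else 0))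
      = (if p = a ∧ q = b then -ρ a b else 0)
        + (if p = b ∧ q = a then -ρ a b else 0) := by
  have hsq : ∀ c : ℂ, c ≠ 0 → ((Real.sqrt ‖c‖ : ℝ) : ℂ) ≠ 0 := fun c hc => by
    simp only [ne_eq, Complex.ofReal_eq_zero]
    exact Real.sqrt_ne_zero'.mpr (norm_pos_iff.mpr hc)
  by_cases hpq : p = q
  · have h1 : ¬(p = a ∧ q = b) := fun ⟨h1', h2'⟩ => hab (by rw [← h1', hpq, h2'])
    have h2 : ¬(p = b ∧ q = a) := fun ⟨h1', h2'⟩ => hab (by rw [← h2', ← hpq, h1'])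
    rw [if_pos hpq, if_neg h1, if_neg h2, add_zero]
  · rw [if_neg hpq]
    by_cases hpa : p = a
    · by_cases hqb : q = b
      · -- value -ρ a b, conditions: first if true, second false
        have h2 : ¬(p = b ∧ q = a) := fun ⟨h1', _⟩ => hpq (by rw [h1', ← hqb])
        have hc1 : p = a ∧ q = b := ⟨hpa, hqb⟩
        rw [if_pos hc1, if_neg h2, add_zero]
        rw [if_pos hpa.symm, if_neg (fun h : b = p => hab (by rw [← hpa, ← h])),
          if_pos hqb.symm]
        rw [show star ((Real.sqrt ‖ρ p q‖ : ℝ) : ℂ) = ((Real.sqrt ‖ρ p q‖ : ℝ) : ℂ) from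
          Complex.conj_ofReal _]
        rw [← hpa, ← hqb]
        by_cases hz : ρ p q = 0
        · simp [hz]
        · exact div_mul_cancel₀ _ (hsq _ hz)
      · have hwb : (if b = p then -ρ p q / (Real.sqrt ‖ρ p q‖ : ℂ)
            else if b = q then ((Real.sqrt ‖ρ p q‖ : ℝ) : ℂ) else 0) = 0 := by
          rw [if_neg (fun h : b = p => hab (by rw [← hpa, ← h])),
            if_neg (fun h : b = q => hqb h.symm)]
        have h1 : ¬(p = a ∧ q = b) := fun ⟨_, h⟩ => hqb h
        have h2 : ¬(p = b ∧ q = a) := fun ⟨h, _⟩ => hab (by rw [← hpa, h])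
        rw [hwb, star_zero, mul_zero, if_neg h1, if_neg h2, add_zero]
    · by_cases hqa : q = a
      · by_cases hpb : p = b
        · have h1 : ¬(p = a ∧ q = b) := fun ⟨h, _⟩ => hpa h
          have hc1 : p = b ∧ q = a := ⟨hpb, hqa⟩
          rw [if_neg h1, if_pos hc1, zero_add]
          rw [if_neg (fun h : a = p => hpa h.symm), if_pos hqa.symm, if_pos hpb.symm]
          rw [star_div₀, star_neg, hHe q p]
          rw [show star ((Real.sqrt ‖ρ p q‖ : ℝ) : ℂ) = ((Real.sqrt ‖ρ p q‖ : ℝ) : ℂ) from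
            Complex.conj_ofReal _]
          rw [show ρ q p = ρ a b by rw [← hqa, ← hpb]]
          by_cases hz : ρ p q = 0
          · have hz2 : ρ a b = 0 := by
              rw [← hqa, ← hpb, ← hHe q p, hz, star_zero]
            simp [hz, hz2]
          · rw [mul_comm]
            exact div_mul_cancel₀ _ (hsq _ hz)
        · have hwb : (if b = p then -ρ p q / (Real.sqrt ‖ρ p q‖ : ℂ)
              else if b = q then ((Real.sqrt ‖ρ p q‖ : ℝ) : ℂ) else 0) = 0 := by
            rw [if_neg (fun h : b = p => hpb h.symm),
              if_neg (fun h : b = q => hab (by rw [h, hqa]))]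
          have h1 : ¬(p = a ∧ q = b) := fun ⟨h, _⟩ => hpa h
          have h2 : ¬(p = b ∧ q = a) := fun ⟨h, _⟩ => hpb h
          rw [hwb, star_zero, mul_zero, if_neg h1, if_neg h2, add_zero]
      · have hwa : (if a = p then -ρ p q / (Real.sqrt ‖ρ p q‖ : ℂ)
            else if a = q then ((Real.sqrt ‖ρ p q‖ : ℝ) : ℂ) else 0) = 0 := by
          rw [if_neg (fun h : a = p => hpa h.symm), if_neg (fun h : a = q => hqa h.symm)]
        have h1 : ¬(p = a ∧ q = b) := fun ⟨h, _⟩ => hpa h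
        have h2 : ¬(p = b ∧ q = a) := fun ⟨_, h⟩ => hqa h
        rw [hwa, zero_mul, if_neg h1, if_neg h2, add_zero]

lemma diagterm {n : Type*} [Fintype n] [DecidableEq n] (ρ : Matrix n n ℂ)
    (p q : n) (hpq : p ≠ q) (a : n) :
    (if a = p then -ρ p q / (Real.sqrt ‖ρ p q‖ : ℂ)
       else if a = q then ((Real.sqrt ‖ρ p q‖ : ℝ) : ℂ) else 0)
     * star (if a = p then -ρ p q / (Real.sqrt ‖ρ p q‖ : ℂ)
       else if a = q then ((Real.sqrt ‖ρ p q‖ : ℝ) : ℂ) else 0)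
    = (if a = p then ((‖ρ p q‖ : ℝ) : ℂ) else 0)
      + (if a = q then ((‖ρ p q‖ : ℝ) : ℂ) else 0) := by
  by_cases hap : a = p
  · subst hap
    rw [if_pos rfl, if_pos rfl, if_neg hpq, add_zero]
    by_cases hz : ρ a q = 0
    · simp [hz]
    · rw [star_div₀, star_neg]
      rw [show star ((Real.sqrt ‖ρ a q‖ : ℝ) : ℂ) = ((Real.sqrt ‖ρ a q‖ : ℝ) : ℂ) from
        Complex.conj_ofReal _]
      rw [div_mul_div_comm, neg_mul_neg]
      rw [show star (ρ a q) = (starRingEnd ℂ) (ρ a q) from rfl, Complex.mul_conj']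
      rw [← Complex.ofReal_mul, Real.mul_self_sqrt (norm_nonneg _)]
      rw [show ((‖ρ a q‖:ℝ):ℂ)^2 = ((‖ρ a q‖^2 : ℝ) : ℂ) by push_cast; ring]
      rw [← Complex.ofReal_div]
      congr 1
      rw [sq]
      exact mul_div_cancel_right₀ _ (by simpa using hz)
  · rw [if_neg hap, if_neg hap, zero_add]
    by_cases haq : a = q
    · subst haq
      rw [if_pos rfl, if_pos rfl]
      rw [show star ((Real.sqrt ‖ρ p a‖ : ℝ) : ℂ) = ((Real.sqrt ‖ρ p a‖ : ℝ) : ℂ) from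
        Complex.conj_ofReal _]
      rw [← Complex.ofReal_mul, Real.mul_self_sqrt (norm_nonneg _)]
    · rw [if_neg haq, if_neg haq]
      simp

lemma zero_le_real' (r : ℝ) (h : 0 ≤ r) : (0:ℂ) ≤ (r:ℂ) := by
  exact_mod_cast Complex.zero_le_real.mpr h

lemma Cl1_nonneg {n : Type*} [Fintype n] [DecidableEq n] (ρ : Matrix n n ℂ) : 0 ≤ Cl1 ρ :=
  Finset.sum_nonneg fun i _ => Finset.sum_nonneg fun j _ => by positivity

lemma vecMulVec_posSemidef {n : Type*} [Fintype n] (v : n → ℂ) :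
    (Matrix.vecMulVec v (star v)).PosSemidef := by
  refine Matrix.PosSemidef.of_dotProduct_mulVec_nonneg ?_ ?_
  · ext a b
    simp [Matrix.vecMulVec_apply, Matrix.conjTranspose_apply, mul_comm]
  · intro x
    have h1 : Matrix.vecMulVec v (star v) *ᵥ x = (star v ⬝ᵥ x) • v := by
      ext i; simp [Matrix.mulVec, Matrix.vecMulVec_apply, dotProduct, Finset.mul_sum,
        mul_assoc, smul_eq_mul, mul_comm]
      exact Finset.sum_congr rfl (fun j _ => by ring)
    rw [h1]
    have h2 : star x ⬝ᵥ (star v ⬝ᵥ x) • v = (star v ⬝ᵥ x) * (star x ⬝ᵥ v) := by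
      simp [dotProduct_smul, smul_eq_mul, mul_comm]
    rw [h2]
    have h3 : star x ⬝ᵥ v = star (star v ⬝ᵥ x) := by
      simp [dotProduct, Finset.sum_comm, mul_comm]
    rw [h3]
    rw [show star (star v ⬝ᵥ x) = (starRingEnd ℂ) (star v ⬝ᵥ x) from rfl, Complex.mul_conj']
    rw [show ((‖star v ⬝ᵥ x‖:ℂ) ^ 2) = ((‖star v ⬝ᵥ x‖^2 : ℝ) : ℂ) by push_cast; ring]
    exact zero_le_real' _ (sq_nonneg _)

lemma smul_posSemidef {n : Type*} [Fintype n] {c : ℝ} (hc : 0 ≤ c)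
    {M : Matrix n n ℂ} (hM : M.PosSemidef) : (c • M).PosSemidef := by
  refine Matrix.PosSemidef.of_dotProduct_mulVec_nonneg ?_ ?_
  · have := hM.1
    unfold Matrix.IsHermitian at *
    rw [Matrix.conjTranspose_smul, star_trivial, this]
  · intro x
    rw [Matrix.smul_mulVec, dotProduct_smul, Complex.real_smul]
    exact mul_nonneg (zero_le_real' _ hc) (hM.dotProduct_mulVec_nonneg x)

lemma posSemidef_sum {n α : Type*} [Fintype n] [DecidableEq α] (s : Finset α)
    (f : α → Matrix n n ℂ) (h : ∀ a ∈ s, (f a).PosSemidef) :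
    (∑ a ∈ s, f a).PosSemidef := by
  classical
  induction s using Finset.induction_on with
  | empty => simpa using Matrix.PosSemidef.zero
  | insert _ _ hnotmem ih =>
    rw [Finset.sum_insert hnotmem]
    exact (h _ (Finset.mem_insert_self _ _)).add
      (ih fun a ha => h a (Finset.mem_insert_of_mem ha))

lemma cl1_mem {n : Type*} [Fintype n] [DecidableEq n] {ρ : Matrix n n ℂ} (hρ : IsDensity ρ) :
    0 ≤ Cl1 ρ ∧ ∃ τ : Matrix n n ℂ, IsDensity τ ∧
      IsIncoherent ((1 + Cl1 ρ)⁻¹ • (ρ + Cl1 ρ • τ)) := by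
  refine ⟨Cl1_nonneg ρ, ?_⟩
  by_cases hs : Cl1 ρ = 0
  · refine ⟨ρ, hρ, ?_⟩
    intro a b hab
    have hz : ρ a b = 0 := by
      have h0 : ∀ i ∈ Finset.univ, (0:ℝ) ≤ ∑ j : n, if i = j then 0 else ‖ρ i j‖ :=
        fun i _ => Finset.sum_nonneg fun j _ => by positivity
      have hs' : ∑ i : n, ∑ j : n, (if i = j then 0 else ‖ρ i j‖) = 0 := hs
      have h2 : ∑ j : n, (if a = j then 0 else ‖ρ a j‖) = 0 :=
        (Finset.sum_eq_zero_iff_of_nonneg h0).mp hs' a (Finset.mem_univ a)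
      have h3 : (if a = b then 0 else ‖ρ a b‖) = 0 :=
        (Finset.sum_eq_zero_iff_of_nonneg (fun j _ => by positivity)).mp h2 b (Finset.mem_univ b)
      rw [if_neg hab] at h3
      exact norm_eq_zero.mp h3
    simp [hs, hz]
  · set s := Cl1 ρ with hsdef
    have hs0 : 0 < s := lt_of_le_of_ne (Cl1_nonneg ρ) (Ne.symm hs)
    have hHe : ∀ a b : n, star (ρ b a) = ρ a b := fun a b => hρ.1.1.apply a b
    set w : n → n → n → ℂ := fun p q r =>
      if r = p then -ρ p q / (Real.sqrt ‖ρ p q‖ : ℂ)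
      else if r = q then ((Real.sqrt ‖ρ p q‖ : ℝ) : ℂ) else 0 with hw
    set T : Matrix n n ℂ :=
      ∑ p : n, ∑ q : n, (if p = q then (0 : Matrix n n ℂ)
        else Matrix.vecMulVec (w p q) (star (w p q))) with hT
    have hTapp : ∀ a b : n, T a b = ∑ p : n, ∑ q : n,
        (if p = q then (0:ℂ) else w p q a * star (w p q b)) := by
      intro a b
      rw [hT, Matrix.sum_apply]
      refine Finset.sum_congr rfl fun p _ => ?_
      rw [Matrix.sum_apply]
      refine Finset.sum_congr rfl fun q _ => ?_
      by_cases hpq : p = q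
      · simp [hpq]
      · simp [hpq, Matrix.vecMulVec_apply]
    have hwapp : ∀ p q r : n, w p q r
        = if r = p then -ρ p q / (Real.sqrt ‖ρ p q‖ : ℂ)
          else if r = q then ((Real.sqrt ‖ρ p q‖ : ℝ) : ℂ) else 0 := fun _ _ _ => rfl
    -- off-diagonal entries of T
    have hoff : ∀ a b : n, a ≠ b → T a b = -2 * ρ a b := by
      intro a b hab
      have : T a b = ∑ p : n, ∑ q : n,
          ((if p = a ∧ q = b then -ρ a b else 0) + (if p = b ∧ q = a then -ρ a b else 0)) := by
        rw [hTapp]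
        refine Finset.sum_congr rfl fun p _ => Finset.sum_congr rfl fun q _ => ?_
        rw [hwapp p q a, hwapp p q b]
        exact offterm ρ hHe a b hab p q
      rw [this]
      have hsum : ∀ (a' b' : n) (c : ℂ),
          ∑ p : n, ∑ q : n, (if p = a' ∧ q = b' then c else 0) = c := by
        intro a' b' c
        rw [Finset.sum_eq_single a']
        · rw [Finset.sum_eq_single b']
          · simp
          · intro q _ hq; simp [hq]
          · intro h; exact absurd (Finset.mem_univ b') h
        · intro p _ hp
          exact Finset.sum_eq_zero fun q _ => by simp [hp]
        · intro h; exact absurd (Finset.mem_univ a') h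
      simp_rw [Finset.sum_add_distrib]
      rw [hsum, hsum]
      ring
    -- trace of T
    have htrT : T.trace = ((2*s : ℝ) : ℂ) := by
      have h1 : T.trace = ∑ a : n, T a a := rfl
      have h2 : ∀ a : n, T a a = ∑ p : n, ∑ q : n, (if p = q then (0:ℂ)
          else ((if a = p then ((‖ρ p q‖ : ℝ) : ℂ) else 0)
            + (if a = q then ((‖ρ p q‖ : ℝ) : ℂ) else 0))) := by
        intro a
        rw [hTapp]
        refine Finset.sum_congr rfl fun p _ => Finset.sum_congr rfl fun q _ => ?_
        by_cases hpq : p = q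
        · simp [hpq]
        · rw [if_neg hpq, if_neg hpq, hwapp p q a]
          exact diagterm ρ p q hpq a
      rw [h1]
      simp_rw [h2]
      rw [Finset.sum_comm]
      have h3 : ∀ p : n, ∑ a : n, ∑ q : n, (if p = q then (0:ℂ)
          else ((if a = p then ((‖ρ p q‖ : ℝ) : ℂ) else 0)
            + (if a = q then ((‖ρ p q‖ : ℝ) : ℂ) else 0)))
          = ∑ q : n, (if p = q then (0:ℂ) else ((2 * ‖ρ p q‖ : ℝ) : ℂ)) := by
        intro p
        rw [Finset.sum_comm]
        refine Finset.sum_congr rfl fun q _ => ?_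
        by_cases hpq : p = q
        · simp [hpq]
        · rw [if_neg hpq]
          simp_rw [if_neg hpq]
          rw [Finset.sum_add_distrib, Finset.sum_ite_eq' Finset.univ p
            (fun _ => ((‖ρ p q‖ : ℝ) : ℂ)), Finset.sum_ite_eq' Finset.univ q
            (fun _ => ((‖ρ p q‖ : ℝ) : ℂ))]
          simp only [Finset.mem_univ, if_true]
          push_cast
          ring
      simp_rw [h3]
      have h5 : ∀ p q : n, (if p = q then (0:ℂ) else ((2*‖ρ p q‖:ℝ):ℂ))
          = (((if p = q then 0 else 2*‖ρ p q‖ : ℝ)) : ℂ) := by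
        intro p q; by_cases h : p = q <;> simp [h]
      simp_rw [h5, ← Complex.ofReal_sum]
      norm_cast
      rw [hsdef]
      show ∑ p : n, ∑ q : n, (if p = q then 0 else 2*‖ρ p q‖) = 2 * Cl1 ρ
      unfold Cl1
      rw [Finset.mul_sum]
      refine Finset.sum_congr rfl fun p _ => ?_
      rw [Finset.mul_sum]
      refine Finset.sum_congr rfl fun q _ => ?_
      by_cases h : p = q <;> simp [h]
    have hTpsd : T.PosSemidef := by
      rw [hT]
      refine posSemidef_sum _ _ fun p _ => posSemidef_sum _ _ fun q _ => ?_
      by_cases hpq : p = q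
      · simp only [if_pos hpq]; exact Matrix.PosSemidef.zero
      · simp only [if_neg hpq]; exact vecMulVec_posSemidef _
    have hinv : (0:ℝ) ≤ (2*s)⁻¹ := by positivity
    refine ⟨(2*s)⁻¹ • T, ⟨smul_posSemidef hinv hTpsd, ?_⟩, ?_⟩
    · rw [Matrix.trace_smul, htrT]
      rw [Complex.real_smul, ← Complex.ofReal_mul]
      rw [inv_mul_cancel₀ (by positivity)]
      norm_num
    · intro a b hab
      have hTab := hoff a b hab
      show ((1 + s)⁻¹ • (ρ + s • ((2*s)⁻¹ • T))) a b = 0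
      rw [Matrix.smul_apply, Matrix.add_apply, Matrix.smul_apply, Matrix.smul_apply, hTab]
      rw [Complex.real_smul, Complex.real_smul, Complex.real_smul]
      have hsne : (s:ℂ) ≠ 0 := by exact_mod_cast ne_of_gt hs0
      have h6 : ((s:ℂ)) * (((2*s)⁻¹:ℝ) * (-2 * ρ a b)) = -ρ a b := by
        push_cast
        field_simp
      rw [h6]
      simp

lemma robust_le_cl1 {n : Type*} [Fintype n] [DecidableEq n] {ρ : Matrix n n ℂ}
    (hρ : IsDensity ρ) : cohRobustness ρ ≤ Cl1 ρ := by
  apply csInf_le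
  · exact ⟨0, fun x hx => hx.1⟩
  · exact ⟨(cl1_mem hρ).1, (cl1_mem hρ).2⟩

lemma robust_nonneg {n : Type*} [Fintype n] (ρ : Matrix n n ℂ) : 0 ≤ cohRobustness ρ :=
  Real.sInf_nonneg fun _ hx => hx.1

lemma vecMulVec_mulVec' {n : Type*} [Fintype n] (v x : n → ℂ) :
    Matrix.vecMulVec v (star v) *ᵥ x = (star v ⬝ᵥ x) • v := by
  ext i; simp [Matrix.mulVec, Matrix.vecMulVec_apply, dotProduct, Finset.mul_sum,
    mul_assoc, smul_eq_mul, mul_comm]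
  exact Finset.sum_congr rfl (fun j _ => by ring)

lemma pure_trace {n : Type*} [Fintype n] (ψ : n → ℂ) (hψ : ∑ p, ‖ψ p‖ ^ 2 = 1) :
    (Matrix.vecMulVec ψ (star ψ)).trace = 1 := by
  have h1 : ∀ p : n, ψ p * star (ψ p) = ((‖ψ p‖^2 : ℝ) : ℂ) := fun p => by
    rw [show star (ψ p) = (starRingEnd ℂ) (ψ p) from rfl, Complex.mul_conj']
    push_cast; ring
  rw [Matrix.trace]
  simp only [Matrix.diag_apply, Matrix.vecMulVec_apply, Pi.star_apply]
  simp_rw [h1, ← Complex.ofReal_sum, hψ, Complex.ofReal_one]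

lemma robust_ge_cl1_pure {n : Type*} [Fintype n] [DecidableEq n] (ψ : n → ℂ)
    (hψ : ∑ p, ‖ψ p‖ ^ 2 = 1) :
    Cl1 (Matrix.vecMulVec ψ (star ψ)) ≤ cohRobustness (Matrix.vecMulVec ψ (star ψ)) := by
  set ρ := Matrix.vecMulVec ψ (star ψ) with hρdef
  have hρd : IsDensity ρ := ⟨vecMulVec_posSemidef ψ, pure_trace ψ hψ⟩
  apply le_csInf
  · exact ⟨Cl1 ρ, (cl1_mem hρd).1, (cl1_mem hρd).2⟩
  rintro s ⟨hs0, τ, hτ, hinc⟩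
  set u : n → ℂ := fun p => if ψ p = 0 then 1 else ψ p / ((‖ψ p‖ : ℝ) : ℂ) with hu
  have hnorm : ∀ p, ‖u p‖ = 1 := by
    intro p
    by_cases h : ψ p = 0
    · simp [hu, h]
    · simp only [hu, if_neg h]
      rw [norm_div, Complex.norm_real, Real.norm_eq_abs, abs_of_nonneg (norm_nonneg _)]
      exact div_self (norm_ne_zero_iff.mpr h)
  have hu1 : ∀ p, star (u p) * u p = 1 := fun p => by
    rw [mul_comm, show star (u p) = (starRingEnd ℂ) (u p) from rfl, Complex.mul_conj', hnorm p]
    norm_num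
  have hu2 : ∀ p, star (u p) * ψ p = ((‖ψ p‖ : ℝ) : ℂ) := by
    intro p
    by_cases h : ψ p = 0
    · simp [hu, h]
    · simp only [hu, if_neg h]
      rw [star_div₀, show star ((‖ψ p‖:ℝ):ℂ) = ((‖ψ p‖:ℝ):ℂ) from Complex.conj_ofReal _]
      rw [div_mul_eq_mul_div, mul_comm, show star (ψ p) = (starRingEnd ℂ) (ψ p) from rfl,
        Complex.mul_conj']
      rw [show ((‖ψ p‖:ℂ)^2) = ((‖ψ p‖^2 : ℝ) : ℂ) by push_cast; ring]
      rw [show ((‖ψ p‖^2 : ℝ) : ℂ) / ((‖ψ p‖:ℝ):ℂ) = (((‖ψ p‖^2 / ‖ψ p‖ : ℝ)) : ℂ) by push_cast; ring]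
      congr 1
      rw [sq]
      exact mul_div_cancel_right₀ _ (norm_ne_zero_iff.mpr h)
  -- the functional evaluated on an incoherent matrix is its trace
  have hEσ : ∀ σ : Matrix n n ℂ, IsIncoherent σ → star u ⬝ᵥ (σ *ᵥ u) = σ.trace := by
    intro σ hσ
    have h1 : ∀ p, (σ *ᵥ u) p = σ p p * u p := by
      intro p
      rw [Matrix.mulVec, dotProduct]
      rw [Finset.sum_eq_single p]
      · intro q _ hq
        rw [hσ p q (Ne.symm hq), zero_mul]
      · intro h; exact absurd (Finset.mem_univ p) h
    rw [dotProduct]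
    simp only [Pi.star_apply, h1]
    rw [Matrix.trace]
    refine Finset.sum_congr rfl fun p _ => ?_
    rw [show star (u p) * (σ p p * u p) = σ p p * (star (u p) * u p) by ring, hu1 p, mul_one]
    rfl
  have hEρ : star u ⬝ᵥ (ρ *ᵥ u) = (((∑ p, ‖ψ p‖)^2 : ℝ) : ℂ) := by
    rw [hρdef, vecMulVec_mulVec']
    rw [dotProduct_smul]
    have h2 : star u ⬝ᵥ ψ = ((∑ p, ‖ψ p‖ : ℝ) : ℂ) := by
      rw [dotProduct]
      simp only [Pi.star_apply]
      simp_rw [hu2, ← Complex.ofReal_sum]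
    have h3 : star ψ ⬝ᵥ u = ((∑ p, ‖ψ p‖ : ℝ) : ℂ) := by
      have : star ψ ⬝ᵥ u = star (star u ⬝ᵥ ψ) := by
        rw [dotProduct, dotProduct, star_sum]
        refine Finset.sum_congr rfl fun p _ => ?_
        simp [mul_comm]
      rw [this, h2]
      exact Complex.conj_ofReal _
    rw [h3, smul_eq_mul, h2, ← Complex.ofReal_mul, sq]
  -- put things together
  have htrρ : ρ.trace = 1 := hρd.2
  set σ' : Matrix n n ℂ := (1 + s)⁻¹ • (ρ + s • τ) with hσ'
  have hsne : (1 + s : ℝ) ≠ 0 := by positivity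
  have heq : ρ + s • τ = (1 + s) • σ' := by
    rw [hσ', smul_smul, mul_inv_cancel₀ hsne, one_smul]
  have hEσ' : star u ⬝ᵥ (σ' *ᵥ u) = σ'.trace := hEσ σ' hinc
  have htrσ' : σ'.trace = 1 := by
    rw [hσ', Matrix.trace_smul, Matrix.trace_add, Matrix.trace_smul, htrρ, hτ.2]
    rw [Complex.real_smul, Complex.real_smul, mul_one]
    rw [show ((1:ℂ) + (s:ℂ)) = (((1 + s : ℝ)) : ℂ) by push_cast; ring]
    rw [← Complex.ofReal_mul, inv_mul_cancel₀ hsne, Complex.ofReal_one]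
  have hkey : (((∑ p, ‖ψ p‖)^2 : ℝ) : ℂ) + (s:ℂ) * (star u ⬝ᵥ (τ *ᵥ u)) = ((1 + s : ℝ) : ℂ) := by
    have h4 : star u ⬝ᵥ ((ρ + s • τ) *ᵥ u)
        = star u ⬝ᵥ (ρ *ᵥ u) + (s:ℂ) * (star u ⬝ᵥ (τ *ᵥ u)) := by
      rw [Matrix.add_mulVec, dotProduct_add, Matrix.smul_mulVec,
        dotProduct_smul, Complex.real_smul]
    have h5 : star u ⬝ᵥ (((1 + s) • σ') *ᵥ u) = ((1 + s : ℝ) : ℂ) := by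
      rw [Matrix.smul_mulVec, dotProduct_smul, hEσ', htrσ', Complex.real_smul,
        mul_one]
    rw [← hEρ, ← h4, heq, h5]
  have hτpos : (0:ℂ) ≤ star u ⬝ᵥ (τ *ᵥ u) := hτ.1.dotProduct_mulVec_nonneg u
  have hle : (((∑ p, ‖ψ p‖)^2 : ℝ) : ℂ) ≤ ((1 + s : ℝ) : ℂ) := by
    rw [← hkey]
    refine le_add_of_nonneg_right ?_
    exact mul_nonneg (zero_le_real' s hs0) hτpos
  have hler : ((∑ p, ‖ψ p‖)^2 : ℝ) ≤ 1 + s := Complex.real_le_real.mp hle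
  -- (∑ ‖ψ‖)² = 1 + Cl1 ρ
  have hsq : (∑ p, ‖ψ p‖)^2 = 1 + Cl1 ρ := by
    rw [sq, Finset.sum_mul_sum]
    have h6 : ∀ p q : n, ‖ψ p‖ * ‖ψ q‖
        = (if p = q then ‖ψ p‖^2 else 0) + (if p = q then 0 else ‖ρ p q‖) := by
      intro p q
      by_cases h : p = q
      · subst h; simp [sq]
      · simp only [if_neg h, zero_add]
        rw [hρdef, Matrix.vecMulVec_apply, norm_mul, Pi.star_apply, norm_star]
    simp_rw [h6, Finset.sum_add_distrib]
    have h7 : ∑ p : n, ∑ q : n, (if p = q then ‖ψ p‖^2 else 0) = 1 := by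
      rw [← hψ]
      refine Finset.sum_congr rfl fun p _ => ?_
      simp
    rw [h7]
    rfl
  linarith

lemma cl1_superadd {d₁ d₂ : ℕ} (ρ : Matrix (Fin d₁ × Fin d₂) (Fin d₁ × Fin d₂) ℂ)
    (ρ₁ : Matrix (Fin d₁) (Fin d₁) ℂ)
    (hρ₁ : ∀ i i', ρ₁ i i' = ∑ j : Fin d₂, ρ (i, j) (i', j))
    (ρ₂ : Matrix (Fin d₂) (Fin d₂) ℂ)
    (hρ₂ : ∀ j j', ρ₂ j j' = ∑ i : Fin d₁, ρ (i, j) (i, j')) :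
    Cl1 ρ₁ + Cl1 ρ₂ ≤ Cl1 ρ := by
  have h1 : Cl1 ρ₁ ≤ ∑ i : Fin d₁, ∑ i' : Fin d₁,
      (if i = i' then 0 else ∑ j : Fin d₂, ‖ρ (i,j) (i',j)‖) := by
    refine Finset.sum_le_sum fun i _ => Finset.sum_le_sum fun i' _ => ?_
    by_cases h : i = i'
    · simp [h]
    · simp only [if_neg h]
      rw [hρ₁]
      exact norm_sum_le _ _
  have h2 : Cl1 ρ₂ ≤ ∑ j : Fin d₂, ∑ j' : Fin d₂,
      (if j = j' then 0 else ∑ i : Fin d₁, ‖ρ (i,j) (i,j')‖) := by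
    refine Finset.sum_le_sum fun j _ => Finset.sum_le_sum fun j' _ => ?_
    by_cases h : j = j'
    · simp [h]
    · simp only [if_neg h]
      rw [hρ₂]
      exact norm_sum_le _ _
  have h3 : (∑ i : Fin d₁, ∑ i' : Fin d₁, (if i = i' then 0 else ∑ j : Fin d₂, ‖ρ (i,j) (i',j)‖))
      + (∑ j : Fin d₂, ∑ j' : Fin d₂, (if j = j' then 0 else ∑ i : Fin d₁, ‖ρ (i,j) (i,j')‖))
      ≤ Cl1 ρ := by
    -- rewrite both as quadruple sums ordered i, j, i', j'
    have hA : (∑ i : Fin d₁, ∑ i' : Fin d₁,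
        (if i = i' then 0 else ∑ j : Fin d₂, ‖ρ (i,j) (i',j)‖))
        = ∑ i : Fin d₁, ∑ j : Fin d₂, ∑ i' : Fin d₁, ∑ j' : Fin d₂,
          (if i = i' then 0 else if j = j' then ‖ρ (i,j) (i',j')‖ else 0) := by
      refine Finset.sum_congr rfl fun i _ => ?_
      rw [Finset.sum_comm]
      refine Finset.sum_congr rfl fun i' _ => ?_
      by_cases h : i = i'
      · simp [h]
      · simp only [if_neg h]
        refine Finset.sum_congr rfl fun j _ => ?_
        rw [Finset.sum_ite_eq Finset.univ j (fun j' => ‖ρ (i,j) (i',j')‖)]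
        simp
    have hB : (∑ j : Fin d₂, ∑ j' : Fin d₂,
        (if j = j' then 0 else ∑ i : Fin d₁, ‖ρ (i,j) (i,j')‖))
        = ∑ i : Fin d₁, ∑ j : Fin d₂, ∑ i' : Fin d₁, ∑ j' : Fin d₂,
          (if i = i' then (if j = j' then 0 else ‖ρ (i,j) (i',j')‖) else 0) := by
      have hBr : ∀ (i : Fin d₁) (j : Fin d₂), (∑ i' : Fin d₁, ∑ j' : Fin d₂,
          (if i = i' then (if j = j' then 0 else ‖ρ (i,j) (i',j')‖) else 0))
          = ∑ j' : Fin d₂, (if j = j' then 0 else ‖ρ (i,j) (i,j')‖) := by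
        intro i j
        rw [Finset.sum_comm]
        refine Finset.sum_congr rfl fun j' _ => ?_
        rw [Finset.sum_ite_eq Finset.univ i
          (fun i' => if j = j' then 0 else ‖ρ (i,j) (i',j')‖)]
        simp
      simp_rw [hBr]
      have e1 : (∑ j : Fin d₂, ∑ j' : Fin d₂,
          (if j = j' then 0 else ∑ i : Fin d₁, ‖ρ (i,j) (i,j')‖))
          = ∑ j : Fin d₂, ∑ j' : Fin d₂, ∑ i : Fin d₁,
            (if j = j' then 0 else ‖ρ (i,j) (i,j')‖) := by
        refine Finset.sum_congr rfl fun j _ => Finset.sum_congr rfl fun j' _ => ?_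
        by_cases h : j = j' <;> simp [h]
      rw [e1]
      have e2 : ∀ j : Fin d₂, (∑ j' : Fin d₂, ∑ i : Fin d₁,
          (if j = j' then 0 else ‖ρ (i,j) (i,j')‖))
          = ∑ i : Fin d₁, ∑ j' : Fin d₂, (if j = j' then 0 else ‖ρ (i,j) (i,j')‖) :=
        fun j => Finset.sum_comm
      simp_rw [e2]
      exact Finset.sum_comm
    rw [hA, hB]
    unfold Cl1
    rw [Fintype.sum_prod_type]
    simp_rw [Fintype.sum_prod_type, ← Finset.sum_add_distrib]
    refine Finset.sum_le_sum fun i _ => Finset.sum_le_sum fun j _ =>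
      Finset.sum_le_sum fun i' _ => Finset.sum_le_sum fun j' _ => ?_
    by_cases hi : i = i' <;> by_cases hj : j = j' <;>
      simp [hi, hj, Prod.ext_iff, norm_nonneg]
  linarith

theorem cohRobustness_pure_bipartite_superadditive {d₁ d₂ : ℕ}
    (ψ : Fin d₁ × Fin d₂ → ℂ) (hψ : ∑ p, ‖ψ p‖ ^ 2 = 1)
    (ρ : Matrix (Fin d₁ × Fin d₂) (Fin d₁ × Fin d₂) ℂ)
    (hρ : ρ = Matrix.vecMulVec ψ (star ψ))
    (ρ₁ : Matrix (Fin d₁) (Fin d₁) ℂ)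
    (hρ₁ : ∀ i i', ρ₁ i i' = ∑ j : Fin d₂, ρ (i, j) (i', j))
    (ρ₂ : Matrix (Fin d₂) (Fin d₂) ℂ)
    (hρ₂ : ∀ j j', ρ₂ j j' = ∑ i : Fin d₁, ρ (i, j) (i, j')) :
    cohRobustness ρ ≥ cohRobustness ρ₁ + cohRobustness ρ₂ := by
  have hent : ∀ p q : Fin d₁ × Fin d₂, ρ p q = ψ p * star (ψ q) := by
    intro p q; rw [hρ, Matrix.vecMulVec_apply]; rfl
  have hsq : ∀ z : ℂ, z * star z = ((‖z‖^2 : ℝ) : ℂ) := fun z => by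
    rw [show star z = (starRingEnd ℂ) z from rfl, Complex.mul_conj']
    push_cast; ring
  -- ρ₁ is a density matrix
  have hρ₁d : IsDensity ρ₁ := by
    constructor
    · have : ρ₁ = (Matrix.of fun i j => ψ (i, j)) * (Matrix.of fun i j => ψ (i, j))ᴴ := by
        ext i i'
        rw [hρ₁, Matrix.mul_apply]
        refine Finset.sum_congr rfl fun j _ => ?_
        rw [hent, Matrix.conjTranspose_apply]
        rfl
      rw [this]
      exact Matrix.posSemidef_self_mul_conjTranspose _
    · rw [Matrix.trace]
      simp only [Matrix.diag_apply]
      have : ∀ i, ρ₁ i i = ∑ j : Fin d₂, ((‖ψ (i,j)‖^2 : ℝ) : ℂ) := by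
        intro i
        rw [hρ₁]
        exact Finset.sum_congr rfl fun j _ => by rw [hent, hsq]
      simp_rw [this, ← Complex.ofReal_sum]
      rw [show (∑ i : Fin d₁, ∑ j : Fin d₂, ‖ψ (i,j)‖^2) = 1 by
        rw [← hψ, Fintype.sum_prod_type]]
      exact Complex.ofReal_one
  have hρ₂d : IsDensity ρ₂ := by
    constructor
    · have : ρ₂ = (Matrix.of fun j i => ψ (i, j)) * (Matrix.of fun j i => ψ (i, j))ᴴ := by
        ext j j'
        rw [hρ₂, Matrix.mul_apply]
        refine Finset.sum_congr rfl fun i _ => ?_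
        rw [hent, Matrix.conjTranspose_apply]
        rfl
      rw [this]
      exact Matrix.posSemidef_self_mul_conjTranspose _
    · rw [Matrix.trace]
      simp only [Matrix.diag_apply]
      have : ∀ j, ρ₂ j j = ∑ i : Fin d₁, ((‖ψ (i,j)‖^2 : ℝ) : ℂ) := by
        intro j
        rw [hρ₂]
        exact Finset.sum_congr rfl fun i _ => by rw [hent, hsq]
      simp_rw [this, ← Complex.ofReal_sum]
      rw [show (∑ j : Fin d₂, ∑ i : Fin d₁, ‖ψ (i,j)‖^2) = 1 by
        rw [← hψ, Fintype.sum_prod_type, Finset.sum_comm]]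
      exact Complex.ofReal_one
  have key1 : Cl1 ρ ≤ cohRobustness ρ := by
    rw [hρ]
    exact robust_ge_cl1_pure ψ hψ
  have key2 := cl1_superadd ρ ρ₁ hρ₁ ρ₂ hρ₂
  have key3 := robust_le_cl1 hρ₁d
  have key4 := robust_le_cl1 hρ₂d
  linarith
end
end
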